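/- Let S := {n ∈ ℕ | ∃ k ≥ 1, n = 7 + 10k} (i.e., S = 7 + 10ℕ = {17, 27, 37, ...}) and T := {p ∈ ℕ | p prime}. Then M(S ∩ T) is not a subset of M(S) ∪ M(T); that is, even the inclusion M(S ∩ T) ⊆ M(S) ∪ M(T) fails in general. -/
import Mathlib


/-- `Subseq x y` means the decimal digit string of `x` is a subsequence of that of `y`. -/
def Subseq (x y : ℕ) : Prop := (Nat.digits 10 x).Sublist (Nat.digits 10 y)

/-- The minimal set of `S`: elements of `S` containing no smaller element of `S`
as a subsequence of their decimal digits. -/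
def minimalSet (S : Set ℕ) : Set ℕ := {s ∈ S | ¬ ∃ n ∈ S, n < s ∧ Subseq n s}

theorem minimalSet_inter_not_subset_union :
    ¬ minimalSet ({n : ℕ | ∃ k : ℕ, 1 ≤ k ∧ n = 7 + 10 * k} ∩ {p : ℕ | p.Prime}) ⊆
        minimalSet {n : ℕ | ∃ k : ℕ, 1 ≤ k ∧ n = 7 + 10 * k} ∪
          minimalSet {p : ℕ | p.Prime} := by
  intro h
  have hd587 : Nat.digits 10 587 = [7,8,5] := by norm_num
  -- 587 is in the minimal set of the intersection
  have hmem : 587 ∈ minimalSet ({n : ℕ | ∃ k : ℕ, 1 ≤ k ∧ n = 7 + 10 * k} ∩ {p : ℕ | p.Prime}) := by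
    constructor
    · exact ⟨⟨58, by norm_num⟩, by norm_num⟩
    · rintro ⟨n, ⟨⟨k, hk, rfl⟩, hp⟩, hlt, hsub⟩
      unfold Subseq at hsub
      rw [hd587] at hsub
      have hmemsub : Nat.digits 10 (7 + 10 * k) ∈ [7,8,5].sublists :=
        List.mem_sublists.mpr hsub
      have hsl : [7,8,5].sublists = [[], [7], [8], [7, 8], [5], [7, 5], [8, 5], [7, 8, 5]] := by
        decide
      rw [hsl] at hmemsub
      have hof : Nat.ofDigits 10 (Nat.digits 10 (7 + 10 * k)) = 7 + 10 * k :=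
        Nat.ofDigits_digits 10 _
      simp only [List.mem_cons, List.not_mem_nil, or_false] at hmemsub
      rcases hmemsub with h' | h' | h' | h' | h' | h' | h' | h' <;>
        rw [h'] at hof <;> simp [Nat.ofDigits] at hof
      · omega
      · omega
      · omega
      · -- 87 = 7 + 10*k, not prime
        have : k = 8 := by omega
        subst this
        norm_num at hp
      · omega
      · -- 57 = 7 + 10*k, not prime
        have : k = 5 := by omega
        subst this
        norm_num at hp
      · omega
      · omega
  rcases h hmem with h1 | h2
  · -- 587 is not minimal in S: 57 is a smaller element and a subsequence
    apply h1.2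
    refine ⟨57, ⟨5, by norm_num⟩, by norm_num, ?_⟩
    unfold Subseq
    rw [hd587]
    have : Nat.digits 10 57 = [7,5] := by norm_num
    rw [this]; decide
  · -- 587 is not minimal in primes: 7 is a smaller prime and a subsequence
    apply h2.2
    refine ⟨7, by norm_num, by norm_num, ?_⟩
    unfold Subseq
    rw [hd587]
    have : Nat.digits 10 7 = [7] := by norm_num
    rw [this]; decide
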